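/- Let n ≥ 3 and let G be either the complete graph K_n on vertex set {1,…,n} or the star graph S_n on vertex set {1,…,n} centered at vertex 1. Let p = (p_1,…,p_n) be a reliability vector with p_1 ∈ (0,1] and suppose there are indices 2 ≤ i ≠ j ≤ n with 0 < p_i = p_j < 1. For ε ∈ ℝ let p_{i,j}(ε) denote the vector obtained from p by adding ε to coordinate j and subtracting ε from coordinate i. Then there exists ε₀ > 0 such that for every ε ∈ [−ε₀, ε₀] with ε ≠ 0, Sh[v̄_{NC1}](1) evaluated at p_{i,j}(ε) is strictly smaller than Sh[v̄_{NC1}](1) evaluated at p. -/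
import Mathlib


open Finset

attribute [local instance] Classical.propDecidable

noncomputable section

/-- `Π_{T,S}(p) = (∏_{i∈T} p i) * (∏_{i∈S\T} (1 - p i))`. -/
def prodPi {α : Type*} (p : α → ℝ) (T S : Finset α) : ℝ :=
  (∏ i ∈ T, p i) * (∏ i ∈ S \ T, (1 - p i))

/-- Reliability extension of a TU-game. -/
def relExt {α : Type*} (p : α → ℝ) (v : Finset α → ℝ) (S : Finset α) : ℝ :=
  ∑ T ∈ S.powerset, v T * prodPi p T S

/-- The set of players preceding `x` in the ordering `σ`. -/
def precedingSet {α : Type*} [Fintype α] (σ : Fin (Fintype.card α) ≃ α) (x : α) : Finset α :=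
  Finset.univ.filter fun y => σ.symm y < σ.symm x

/-- The Shapley value of player `x` in the TU-game `v`. -/
def shapley {α : Type*} [Fintype α] (v : Finset α → ℝ) (x : α) : ℝ :=
  (1 / ((Fintype.card α).factorial : ℝ)) *
    ∑ σ : Fin (Fintype.card α) ≃ α,
      (v (insert x (precedingSet σ x)) - v (precedingSet σ x))

/-- The (open) neighborhood of `v` as a finset. -/
def nbhd {α : Type*} [Fintype α] (G : SimpleGraph α) (v : α) : Finset α :=
  Finset.univ.filter fun y => G.Adj v y

/-- `N̂(v) = {v} ∪ N(v)`. -/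
def closedNbhd {α : Type*} [Fintype α] (G : SimpleGraph α) (v : α) : Finset α :=
  insert v (nbhd G v)

/-- `δ(S)`: vertices outside `S` having a neighbor in `S`. -/
def extBoundary {α : Type*} [Fintype α] (G : SimpleGraph α) (S : Finset α) : Finset α :=
  Finset.univ.filter fun y => y ∉ S ∧ ∃ x ∈ S, G.Adj x y

/-- The network centrality game `Γ_{NC1}`: `v(S) = |S ∪ δ(S)|`. -/
def vNC1 {α : Type*} [Fintype α] (G : SimpleGraph α) (S : Finset α) : ℝ :=
  ((S ∪ extBoundary G S).card : ℝ)

/-- The star graph on `Fin n` centered at `c`. -/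
def starGraph (n : ℕ) (c : Fin n) : SimpleGraph (Fin n) :=
  SimpleGraph.fromRel (fun i _ => i = c)

section helpers

variable {α : Type*}

lemma prodPi_congr {p q : α → ℝ} {T S : Finset α} (h : ∀ k ∈ S, p k = q k) (hTS : T ⊆ S) :
    prodPi p T S = prodPi q T S := by
  unfold prodPi
  congr 1
  · exact Finset.prod_congr rfl fun k hk => h k (hTS hk)
  · exact Finset.prod_congr rfl fun k hk => by rw [h k (Finset.mem_sdiff.1 hk).1]

lemma prodPi_nonneg {p : α → ℝ} (hp : ∀ k, p k ∈ Set.Icc (0:ℝ) 1) (T S : Finset α) :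
    0 ≤ prodPi p T S :=
  mul_nonneg (Finset.prod_nonneg fun k _ => (hp k).1)
    (Finset.prod_nonneg fun k _ => by linarith [(hp k).2])

lemma prodPi_update (q : α → ℝ) (k : α) (x : ℝ) (T S : Finset α) :
    prodPi (Function.update q k x) T S
      = prodPi (Function.update q k 0) T S
        + x * (prodPi (Function.update q k 1) T S - prodPi (Function.update q k 0) T S) := by
  classical
  have hup : ∀ (y : ℝ) (U : Finset α), k ∉ U →
      (∏ m ∈ U, Function.update q k y m) = ∏ m ∈ U, q m :=
    fun y U hU => Finset.prod_congr rfl fun m hm =>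
      Function.update_of_ne (ne_of_mem_of_not_mem hm hU) _ _
  have hup1 : ∀ (y : ℝ) (U : Finset α), k ∉ U →
      (∏ m ∈ U, (1 - Function.update q k y m)) = ∏ m ∈ U, (1 - q m) :=
    fun y U hU => Finset.prod_congr rfl fun m hm => by
      rw [Function.update_of_ne (ne_of_mem_of_not_mem hm hU)]
  have honesub : ∀ (y : ℝ) (U : Finset α),
      (∏ m ∈ U, (1 - Function.update q k y m))
        = ∏ m ∈ U, Function.update (fun m => 1 - q m) k (1 - y) m := by
    intro y U
    refine Finset.prod_congr rfl fun m _ => ?_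
    rcases eq_or_ne m k with rfl | h
    · simp
    · simp [Function.update_of_ne h]
  unfold prodPi
  by_cases hkT : k ∈ T
  · have hkS : k ∉ S \ T := fun h => (Finset.mem_sdiff.1 h).2 hkT
    rw [Finset.prod_update_of_mem hkT, Finset.prod_update_of_mem hkT,
      Finset.prod_update_of_mem hkT, hup1 x _ hkS, hup1 0 _ hkS, hup1 1 _ hkS]
    ring
  · by_cases hkS : k ∈ S \ T
    · rw [hup x _ hkT, hup 0 _ hkT, hup 1 _ hkT, honesub x, honesub 0, honesub 1,
        Finset.prod_update_of_mem hkS, Finset.prod_update_of_mem hkS,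
        Finset.prod_update_of_mem hkS]
      ring
    · rw [hup x _ hkT, hup 0 _ hkT, hup 1 _ hkT, hup1 x _ hkS, hup1 0 _ hkS, hup1 1 _ hkS]
      ring

lemma relExt_update (q : α → ℝ) (k : α) (x : ℝ) (v : Finset α → ℝ) (S : Finset α) :
    relExt (Function.update q k x) v S
      = relExt (Function.update q k 0) v S
        + x * (relExt (Function.update q k 1) v S - relExt (Function.update q k 0) v S) := by
  unfold relExt
  have h : ∀ T ∈ S.powerset, v T * prodPi (Function.update q k x) T S =
      v T * prodPi (Function.update q k 0) T S
        + (x * (v T * prodPi (Function.update q k 1) T S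
          - v T * prodPi (Function.update q k 0) T S)) := fun T _ => by
    rw [prodPi_update q k x]; ring
  rw [Finset.sum_congr rfl h, Finset.sum_add_distrib, ← Finset.mul_sum,
    Finset.sum_sub_distrib]


lemma relExt_update_notmem (q : α → ℝ) (k : α) (x : ℝ) (v : Finset α → ℝ) {S : Finset α}
    (hk : k ∉ S) : relExt (Function.update q k x) v S = relExt q v S := by
  unfold relExt
  refine Finset.sum_congr rfl fun T hT => ?_
  congr 1
  exact prodPi_congr (fun m hm => Function.update_of_ne (ne_of_mem_of_not_mem hm hk) _ _)
    (Finset.mem_powerset.1 hT)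

lemma prodPi_insert_right (q : α → ℝ) {k : α} {T S : Finset α} (hk : k ∉ S) (hT : T ⊆ S) :
    prodPi q T (insert k S) = (1 - q k) * prodPi q T S := by
  classical
  have hkT : k ∉ T := fun h => hk (hT h)
  have h1 : insert k S \ T = insert k (S \ T) := Finset.insert_sdiff_of_notMem _ hkT
  have h2 : k ∉ S \ T := fun h => hk (Finset.mem_sdiff.1 h).1
  unfold prodPi
  rw [h1, Finset.prod_insert h2]
  ring

lemma prodPi_insert_both (q : α → ℝ) {k : α} {T S : Finset α} (hk : k ∉ S) (hT : T ⊆ S) :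
    prodPi q (insert k T) (insert k S) = q k * prodPi q T S := by
  classical
  have hkT : k ∉ T := fun h => hk (hT h)
  have h1 : insert k S \ insert k T = S \ T := by
    ext x
    simp only [Finset.mem_sdiff, Finset.mem_insert, not_or]
    constructor
    · rintro ⟨hx1 | hx2, hx3, hx4⟩
      · exact absurd (hx1 ▸ hx3) (fun h => h rfl)
      · exact ⟨hx2, hx4⟩
    · rintro ⟨hx1, hx2⟩
      exact ⟨Or.inr hx1, fun h => hk (h ▸ hx1), hx2⟩
  unfold prodPi
  rw [h1, Finset.prod_insert hkT]
  ring

lemma relExt_insert2 (q : α → ℝ) (v : Finset α → ℝ) {i j : α} (S' : Finset α)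
    (hij : i ≠ j) (hi : i ∉ S') (hj : j ∉ S') :
    relExt q v (insert i (insert j S')) =
      ∑ T ∈ S'.powerset,
        ((1 - q i) * ((1 - q j) * v T) + q i * ((1 - q j) * v (insert i T))
          + (1 - q i) * (q j * v (insert j T))
          + q i * (q j * v (insert i (insert j T))))
          * prodPi q T S' := by
  classical
  have hi' : i ∉ insert j S' := by simp [hij, hi]
  unfold relExt
  rw [Finset.sum_powerset_insert hi', Finset.sum_powerset_insert hj,
    Finset.sum_powerset_insert hj]
  have e1 : ∀ T ∈ S'.powerset,
      v T * prodPi q T (insert i (insert j S'))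
        = (1 - q i) * ((1 - q j) * (v T * prodPi q T S')) := by
    intro T hT
    have hT' : T ⊆ S' := Finset.mem_powerset.1 hT
    rw [prodPi_insert_right q hi' (hT'.trans (Finset.subset_insert _ _)),
      prodPi_insert_right q hj hT']
    ring
  have e2 : ∀ T ∈ S'.powerset,
      v (insert j T) * prodPi q (insert j T) (insert i (insert j S'))
        = (1 - q i) * (q j * (v (insert j T) * prodPi q T S')) := by
    intro T hT
    have hT' : T ⊆ S' := Finset.mem_powerset.1 hT
    rw [prodPi_insert_right q hi' (Finset.insert_subset_insert _ hT'),
      prodPi_insert_both q hj hT']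
    ring
  have e3 : ∀ T ∈ S'.powerset,
      v (insert i T) * prodPi q (insert i T) (insert i (insert j S'))
        = q i * ((1 - q j) * (v (insert i T) * prodPi q T S')) := by
    intro T hT
    have hT' : T ⊆ S' := Finset.mem_powerset.1 hT
    rw [prodPi_insert_both q hi' (hT'.trans (Finset.subset_insert _ _)),
      prodPi_insert_right q hj hT']
    ring
  have e4 : ∀ T ∈ S'.powerset,
      v (insert i (insert j T)) * prodPi q (insert i (insert j T)) (insert i (insert j S'))
        = q i * (q j * (v (insert i (insert j T)) * prodPi q T S')) := by
    intro T hT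
    have hT' : T ⊆ S' := Finset.mem_powerset.1 hT
    rw [prodPi_insert_both q hi' (Finset.insert_subset_insert _ hT'),
      prodPi_insert_both q hj hT']
    ring
  rw [Finset.sum_congr rfl e1, Finset.sum_congr rfl e2, Finset.sum_congr rfl e3,
    Finset.sum_congr rfl e4, ← Finset.sum_add_distrib, ← Finset.sum_add_distrib,
    ← Finset.sum_add_distrib]
  exact Finset.sum_congr rfl fun T _ => by ring

lemma sum_aff {ι : Type*} [Fintype ι] (C x : ℝ) (A B : ι → ℝ) :
    C * ∑ t, (A t + x * (B t - A t)) = C * ∑ t, A t + x * (C * ∑ t, B t - C * ∑ t, A t) := by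
  rw [Finset.sum_add_distrib, ← Finset.mul_sum, Finset.sum_sub_distrib]
  ring

lemma shapley_relExt_update [Fintype α] (v : Finset α → ℝ) (c : α) (q : α → ℝ) (k : α) (x : ℝ) :
    shapley (relExt (Function.update q k x) v) c
      = shapley (relExt (Function.update q k 0) v) c
        + x * (shapley (relExt (Function.update q k 1) v) c
               - shapley (relExt (Function.update q k 0) v) c) := by
  unfold shapley
  have h : ∀ σ : Fin (Fintype.card α) ≃ α,
      (relExt (Function.update q k x) v (insert c (precedingSet σ c))
        - relExt (Function.update q k x) v (precedingSet σ c))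
      = ((fun σ : Fin (Fintype.card α) ≃ α =>
            relExt (Function.update q k 0) v (insert c (precedingSet σ c))
              - relExt (Function.update q k 0) v (precedingSet σ c)) σ
        + x * ((fun σ : Fin (Fintype.card α) ≃ α =>
            relExt (Function.update q k 1) v (insert c (precedingSet σ c))
              - relExt (Function.update q k 1) v (precedingSet σ c)) σ
          - (fun σ : Fin (Fintype.card α) ≃ α =>
            relExt (Function.update q k 0) v (insert c (precedingSet σ c))
              - relExt (Function.update q k 0) v (precedingSet σ c)) σ)) := fun σ => by
    simp only
    rw [relExt_update q k x, relExt_update q k x]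
    ring
  rw [Fintype.sum_congr _ _ h]
  exact sum_aff _ x _ _

lemma mem_extBoundary [Fintype α] {G : SimpleGraph α} {S : Finset α} {y : α} :
    y ∈ extBoundary G S ↔ (y ∉ S ∧ ∃ x ∈ S, G.Adj x y) := by
  rw [extBoundary, Finset.mem_filter]
  simp

lemma precedingSet_comp [Fintype α] (e : α ≃ α) (σ : Fin (Fintype.card α) ≃ α) (x : α) :
    precedingSet (σ.trans e) (e x) = (precedingSet σ x).image e := by
  classical
  ext y
  simp only [precedingSet, Finset.mem_filter, Finset.mem_univ, true_and, Finset.mem_image]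
  constructor
  · intro h
    refine ⟨e.symm y, ?_, e.apply_symm_apply y⟩
    simpa using h
  · rintro ⟨z, hz, rfl⟩
    simpa using hz

lemma shapley_comp [Fintype α] (v : Finset α → ℝ) (e : α ≃ α) (x : α) :
    shapley (fun S => v (S.image e)) x = shapley v (e x) := by
  classical
  unfold shapley
  congr 1
  refine Fintype.sum_equiv
    ⟨fun σ => σ.trans e, fun σ => σ.trans e.symm,
      fun σ => by ext k; simp, fun σ => by ext k; simp⟩ _ _ fun σ => ?_
  simp only [Equiv.coe_fn_mk]
  rw [precedingSet_comp, ← Finset.image_insert]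

lemma prodPi_image (e : α ≃ α) (q : α → ℝ) (T S : Finset α) :
    prodPi q (T.image e) (S.image e) = prodPi (fun k => q (e k)) T S := by
  classical
  unfold prodPi
  rw [← Finset.image_sdiff S T e.injective,
    Finset.prod_image (fun a _ b _ h => e.injective h),
    Finset.prod_image (fun a _ b _ h => e.injective h)]

lemma relExt_comp (e : α ≃ α) (q : α → ℝ) (v : Finset α → ℝ) (S : Finset α) :
    relExt q v (S.image e) = relExt (fun k => q (e k)) (fun T => v (T.image e)) S := by
  classical
  unfold relExt
  refine (Finset.sum_nbij' (fun T => T.image e) (fun T => T.image e.symm) ?_ ?_ ?_ ?_ ?_).symm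
  · exact fun T hT => Finset.mem_powerset.2
      (Finset.image_subset_image (Finset.mem_powerset.1 hT))
  · intro T hT
    refine Finset.mem_powerset.2 ?_
    intro x hx
    rcases Finset.mem_image.1 hx with ⟨y, hy, rfl⟩
    rcases Finset.mem_image.1 (Finset.mem_powerset.1 hT hy) with ⟨z, hz, rfl⟩
    simpa using hz
  · intro T _
    simp [Finset.image_image]
  · intro T _
    simp [Finset.image_image]
  · intro T _
    congr 1
    exact (prodPi_image e q T S).symm

lemma extBoundary_comp [Fintype α] (G : SimpleGraph α) (e : α ≃ α)
    (he : ∀ x y, G.Adj (e x) (e y) ↔ G.Adj x y) (S : Finset α) :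
    extBoundary G (S.image e) = (extBoundary G S).image e := by
  classical
  ext y
  constructor
  · intro hy
    rw [extBoundary, Finset.mem_filter] at hy
    obtain ⟨-, hyS, x, hx, hadj⟩ := hy
    obtain ⟨z, hz, rfl⟩ := Finset.mem_image.1 hx
    refine Finset.mem_image.2 ⟨e.symm y, ?_, e.apply_symm_apply y⟩
    rw [extBoundary, Finset.mem_filter]
    refine ⟨Finset.mem_univ _, ?_, z, hz, ?_⟩
    · intro h
      exact hyS (Finset.mem_image.2 ⟨_, h, e.apply_symm_apply y⟩)
    · rw [← he, e.apply_symm_apply]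
      exact hadj
  · intro hy
    obtain ⟨z, hz, rfl⟩ := Finset.mem_image.1 hy
    rw [extBoundary, Finset.mem_filter] at hz
    obtain ⟨-, hzS, x, hx, hadj⟩ := hz
    rw [extBoundary, Finset.mem_filter]
    refine ⟨Finset.mem_univ _, ?_, e x, Finset.mem_image_of_mem _ hx, (he x z).2 hadj⟩
    intro h
    obtain ⟨w, hw, hwz⟩ := Finset.mem_image.1 h
    exact hzS (by rwa [e.injective hwz] at hw)

lemma vNC1_comp [Fintype α] (G : SimpleGraph α) (e : α ≃ α)
    (he : ∀ x y, G.Adj (e x) (e y) ↔ G.Adj x y) (S : Finset α) :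
    vNC1 G (S.image e) = vNC1 G S := by
  classical
  unfold vNC1
  rw [extBoundary_comp G e he, ← Finset.image_union,
    Finset.card_image_of_injective _ e.injective]

lemma shapley_relExt_comp [Fintype α] (G : SimpleGraph α) (e : α ≃ α)
    (he : ∀ x y, G.Adj (e x) (e y) ↔ G.Adj x y) (q : α → ℝ) (c : α) (hc : e c = c) :
    shapley (relExt (fun k => q (e k)) (vNC1 G)) c = shapley (relExt q (vNC1 G)) c := by
  have h1 : ∀ S : Finset α, relExt (fun k => q (e k)) (vNC1 G) S
      = relExt q (vNC1 G) (S.image e) := by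
    intro S
    rw [relExt_comp e q (vNC1 G) S]
    unfold relExt
    refine Finset.sum_congr rfl fun T _ => ?_
    simp only [vNC1_comp G e he]
  calc shapley (relExt (fun k => q (e k)) (vNC1 G)) c
      = shapley (fun S => relExt q (vNC1 G) (S.image e)) c := by
        unfold shapley
        rw [Fintype.sum_congr _ _ (fun σ => by rw [h1, h1])]
    _ = shapley (relExt q (vNC1 G)) (e c) := shapley_comp _ e c
    _ = _ := by rw [hc]

end helpers

theorem stmt_19 (n : ℕ) (hn : 3 ≤ n) (G : SimpleGraph (Fin n))
    (hG : G = ⊤ ∨ G = starGraph n ⟨0, by omega⟩)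
    (p : Fin n → ℝ) (hp : ∀ i, p i ∈ Set.Icc (0 : ℝ) 1)
    (hp1 : 0 < p ⟨0, by omega⟩)
    (i j : Fin n) (hi : i ≠ ⟨0, by omega⟩) (hj : j ≠ ⟨0, by omega⟩) (hij : i ≠ j)
    (hpi : 0 < p i) (hpij : p i = p j) (hpj : p j < 1) :
    ∃ ε₀ > (0 : ℝ), ∀ ε ∈ Set.Icc (-ε₀) ε₀, ε ≠ 0 →
      shapley
          (relExt (Function.update (Function.update p j (p j + ε)) i (p i - ε)) (vNC1 G))
          ⟨0, by omega⟩ <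
        shapley (relExt p (vNC1 G)) ⟨0, by omega⟩ := by
  have h0n : 0 < n := by omega
  have hupd : ∀ (f : Fin n → ℝ) (a : Fin n) (x : ℝ),
      @Function.update (Fin n) (fun _ => ℝ) (instDecidableEqFin n) f a x
        = @Function.update (Fin n) (fun _ => ℝ) (fun a b => Classical.propDecidable (a = b))
            f a x := by
    intro f a x
    have h : (instDecidableEqFin n)
        = (fun (a b : Fin n) => Classical.propDecidable (a = b)) := Subsingleton.elim _ _
    rw [h]
  letI instC : DecidableEq (Fin n) := fun a b => Classical.propDecidable (a = b)
  set c0 : Fin n := ⟨0, h0n⟩ with hc0def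
  have hic0 : i ≠ c0 := hi
  have hjc0 : j ≠ c0 := hj
  have hp1' : 0 < p c0 := hp1
  have hG' : G = ⊤ ∨ G = starGraph n c0 := by
    rcases hG with h | h
    · exact Or.inl h
    · exact Or.inr h
  clear hG hp1 hi hj
  set u : ℝ → ℝ → (Fin n → ℝ) := fun x y => Function.update (Function.update p i x) j y
    with hu
  have hu_i : ∀ x y : ℝ, u x y i = x := by
    intro x y
    simp only [hu]
    rw [Function.update_of_ne hij, Function.update_self]
  have hu_j : ∀ x y : ℝ, u x y j = y := by
    intro x y
    simp only [hu]
    rw [Function.update_self]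
  have hu_k : ∀ (x y : ℝ) (k : Fin n), k ≠ i → k ≠ j → u x y k = p k := by
    intro x y k hki hkj
    simp only [hu]
    rw [Function.update_of_ne hkj, Function.update_of_ne hki]
  -- graph facts
  have hGadj0 : ∀ y : Fin n, y ≠ c0 → G.Adj c0 y := by
    rcases hG' with rfl | rfl
    · intro y hy
      rw [SimpleGraph.top_adj]
      exact Ne.symm hy
    · intro y hy
      rw [starGraph, SimpleGraph.fromRel_adj]
      exact ⟨Ne.symm hy, Or.inl rfl⟩
  have hvfull : ∀ S : Finset (Fin n), c0 ∈ S → vNC1 G S = n := by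
    intro S hS
    have huniv : S ∪ extBoundary G S = Finset.univ := by
      apply Finset.eq_univ_of_forall
      intro y
      by_cases hyS : y ∈ S
      · exact Finset.mem_union_left _ hyS
      · refine Finset.mem_union_right _ ?_
        rw [mem_extBoundary]
        exact ⟨hyS, c0, hS, hGadj0 y (fun h => hyS (h ▸ hS))⟩
    rw [vNC1, huniv, Finset.card_univ, Fintype.card_fin]
  have hvempty : vNC1 G ∅ = 0 := by
    have hb : extBoundary G ∅ = ∅ := by
      ext y
      rw [mem_extBoundary]
      simp
    rw [vNC1, hb]
    simp
  have hvKn : G = ⊤ → ∀ S : Finset (Fin n), S.Nonempty → vNC1 G S = n := by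
    rintro rfl S ⟨x, hx⟩
    have huniv : S ∪ extBoundary (⊤ : SimpleGraph (Fin n)) S = Finset.univ := by
      apply Finset.eq_univ_of_forall
      intro y
      by_cases hyS : y ∈ S
      · exact Finset.mem_union_left _ hyS
      · refine Finset.mem_union_right _ ?_
        rw [mem_extBoundary]
        refine ⟨hyS, x, hx, ?_⟩
        rw [SimpleGraph.top_adj]
        exact fun h => hyS (h ▸ hx)
    rw [vNC1, huniv, Finset.card_univ, Fintype.card_fin]
  have hvStar : G = starGraph n c0 → ∀ S : Finset (Fin n), c0 ∉ S → S.Nonempty →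
      vNC1 G S = S.card + 1 := by
    rintro rfl S hc0S ⟨x, hx⟩
    have hxc0 : x ≠ c0 := fun h => hc0S (h ▸ hx)
    have hδ : extBoundary (starGraph n c0) S = {c0} := by
      ext y
      rw [mem_extBoundary, Finset.mem_singleton]
      constructor
      · rintro ⟨hyS, z, hz, hadj⟩
        rw [starGraph, SimpleGraph.fromRel_adj] at hadj
        rcases hadj with ⟨hzy, h1 | h2⟩
        · exact absurd (h1 ▸ hz) hc0S
        · exact h2
      · rintro rfl
        refine ⟨hc0S, x, hx, ?_⟩
        rw [starGraph, SimpleGraph.fromRel_adj]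
        exact ⟨hxc0, Or.inr rfl⟩
    rw [vNC1, hδ, Finset.union_comm, ← Finset.insert_eq,
      Finset.card_insert_of_notMem hc0S]
    push_cast
    ring
  -- the second-difference game quantity
  set D2 : Finset (Fin n) → ℝ := fun T =>
    vNC1 G (insert i (insert j T)) - vNC1 G (insert i T) - vNC1 G (insert j T) + vNC1 G T
    with hD2
  have hD2c0 : ∀ T : Finset (Fin n), D2 (insert c0 T) = 0 := by
    intro T
    have h1 : c0 ∈ insert c0 T := Finset.mem_insert_self _ _
    simp only [hD2]
    rw [hvfull _ (Finset.mem_insert_of_mem (Finset.mem_insert_of_mem h1)),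
      hvfull _ (Finset.mem_insert_of_mem h1), hvfull _ (Finset.mem_insert_of_mem h1),
      hvfull _ h1]
    ring
  have hD2empty : D2 ∅ ≤ -1 := by
    simp only [hD2]
    have h3 : (3:ℝ) ≤ (n:ℝ) := by exact_mod_cast hn
    rcases hG' with hGt | hGs
    · rw [hvKn hGt _ ⟨i, Finset.mem_insert_self i _⟩,
        hvKn hGt _ ⟨i, Finset.mem_insert_self i _⟩,
        hvKn hGt _ ⟨j, Finset.mem_insert_self j _⟩, hvempty]
      linarith
    · have hc1 : c0 ∉ insert i (insert j (∅ : Finset (Fin n))) := by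
        simp [Ne.symm hic0, Ne.symm hjc0]
      have hc2 : c0 ∉ insert i (∅ : Finset (Fin n)) := by simp [Ne.symm hic0]
      have hc3 : c0 ∉ insert j (∅ : Finset (Fin n)) := by simp [Ne.symm hjc0]
      rw [hvStar hGs _ hc1 ⟨i, Finset.mem_insert_self i _⟩,
        hvStar hGs _ hc2 ⟨i, Finset.mem_insert_self i _⟩,
        hvStar hGs _ hc3 ⟨j, Finset.mem_insert_self j _⟩, hvempty]
      have hcard2 : (insert i (insert j (∅ : Finset (Fin n)))).card = 2 := by
        rw [Finset.card_insert_of_notMem (by simp [hij]),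
          Finset.card_insert_of_notMem (Finset.notMem_empty j), Finset.card_empty]
      have hcard1 : (insert i (∅ : Finset (Fin n))).card = 1 := by
        rw [Finset.card_insert_of_notMem (Finset.notMem_empty i), Finset.card_empty]
      have hcard1' : (insert j (∅ : Finset (Fin n))).card = 1 := by
        rw [Finset.card_insert_of_notMem (Finset.notMem_empty j), Finset.card_empty]
      rw [hcard2, hcard1, hcard1']
      norm_num
  have hD2le : ∀ T : Finset (Fin n), c0 ∉ T → i ∉ T → j ∉ T → D2 T ≤ 0 := by
    intro T hc0T hiT hjT
    rcases T.eq_empty_or_nonempty with rfl | hne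
    · linarith [hD2empty]
    · simp only [hD2]
      rcases hG' with hGt | hGs
      · rw [hvKn hGt _ ((hne.mono (Finset.subset_insert j T)).mono (Finset.subset_insert i _)),
          hvKn hGt _ (hne.mono (Finset.subset_insert i T)),
          hvKn hGt _ (hne.mono (Finset.subset_insert j T)), hvKn hGt _ hne]
        linarith
      · have hijT : i ∉ insert j T := by simp [hij, hiT]
        have hc1 : c0 ∉ insert i (insert j T) := by
          simp [Ne.symm hic0, Ne.symm hjc0, hc0T]
        have hc2 : c0 ∉ insert i T := by simp [Ne.symm hic0, hc0T]
        have hc3 : c0 ∉ insert j T := by simp [Ne.symm hjc0, hc0T]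
        rw [hvStar hGs _ hc1 (Finset.insert_nonempty _ _),
          hvStar hGs _ hc2 (Finset.insert_nonempty _ _),
          hvStar hGs _ hc3 (Finset.insert_nonempty _ _),
          hvStar hGs _ hc0T hne,
          Finset.card_insert_of_notMem hijT, Finset.card_insert_of_notMem hjT,
          Finset.card_insert_of_notMem hiT]
        push_cast
        linarith
  -- corner second difference of relExt
  set Rr : Finset (Fin n) → ℝ := fun S => relExt (u 1 1) (vNC1 G) S
    - relExt (u 1 0) (vNC1 G) S - relExt (u 0 1) (vNC1 G) S + relExt (u 0 0) (vNC1 G) S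
    with hRr
  have hR0 : ∀ S : Finset (Fin n), (i ∉ S ∨ j ∉ S) → Rr S = 0 := by
    intro S hS
    simp only [hRr, hu]
    rcases hS with hiS | hjS
    · have e : ∀ x y : ℝ, relExt (Function.update (Function.update p i x) j y) (vNC1 G) S
          = relExt (Function.update p j y) (vNC1 G) S := by
        intro x y
        rw [Function.update_comm hij]
        exact relExt_update_notmem _ i x _ hiS
      rw [e 1 1, e 1 0, e 0 1, e 0 0]
      ring
    · have e : ∀ x y : ℝ, relExt (Function.update (Function.update p i x) j y) (vNC1 G) S
          = relExt (Function.update p i x) (vNC1 G) S := by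
        intro x y
        exact relExt_update_notmem _ j y _ hjS
      rw [e 1 1, e 1 0, e 0 1, e 0 0]
      ring
  have hRmain : ∀ S' : Finset (Fin n), i ∉ S' → j ∉ S' →
      Rr (insert i (insert j S')) = ∑ T ∈ S'.powerset, D2 T * prodPi p T S' := by
    intro S' hiS hjS
    have hpp : ∀ (x y : ℝ), ∀ T ∈ S'.powerset, prodPi (u x y) T S' = prodPi p T S' := by
      intro x y T hT
      exact prodPi_congr
        (fun m hm => hu_k x y m (fun h => hiS (h ▸ hm)) (fun h => hjS (h ▸ hm)))
        (Finset.mem_powerset.1 hT)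
    simp only [hRr]
    rw [relExt_insert2 (u 1 1) _ S' hij hiS hjS, relExt_insert2 (u 1 0) _ S' hij hiS hjS,
      relExt_insert2 (u 0 1) _ S' hij hiS hjS, relExt_insert2 (u 0 0) _ S' hij hiS hjS,
      ← Finset.sum_sub_distrib, ← Finset.sum_sub_distrib, ← Finset.sum_add_distrib]
    refine Finset.sum_congr rfl fun T hT => ?_
    rw [hpp 1 1 T hT, hpp 1 0 T hT, hpp 0 1 T hT, hpp 0 0 T hT]
    simp only [hu_i, hu_j, hD2]
    ring
  -- per-ordering difference
  have ht : ∀ σ : Fin (Fintype.card (Fin n)) ≃ Fin n,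
      i ∈ precedingSet σ c0 → j ∈ precedingSet σ c0 →
      Rr (insert c0 (precedingSet σ c0)) - Rr (precedingSet σ c0)
        = p c0 * ∑ T ∈ (((precedingSet σ c0).erase i).erase j).powerset,
            (D2 (insert c0 T) - D2 T) * prodPi p T (((precedingSet σ c0).erase i).erase j) := by
    intro σ hiσ hjσ
    have hc0pre : c0 ∉ precedingSet σ c0 := by
      rw [precedingSet, Finset.mem_filter]
      simp
    have hiA : i ∉ ((precedingSet σ c0).erase i).erase j := fun h =>
      Finset.notMem_erase i _ (Finset.mem_of_mem_erase h)
    have hjA : j ∉ ((precedingSet σ c0).erase i).erase j := Finset.notMem_erase j _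
    have hc0A : c0 ∉ ((precedingSet σ c0).erase i).erase j := fun h =>
      hc0pre (Finset.mem_of_mem_erase (Finset.mem_of_mem_erase h))
    have hpre : precedingSet σ c0
        = insert i (insert j (((precedingSet σ c0).erase i).erase j)) := by
      rw [Finset.insert_erase (Finset.mem_erase.2 ⟨Ne.symm hij, hjσ⟩), Finset.insert_erase hiσ]
    have hins : insert c0 (precedingSet σ c0)
        = insert i (insert j (insert c0 (((precedingSet σ c0).erase i).erase j))) := by
      conv_lhs => rw [hpre]
      rw [Finset.insert_comm c0 i, Finset.insert_comm c0 j]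
    have hiA' : i ∉ insert c0 (((precedingSet σ c0).erase i).erase j) := by
      simp [hic0, hiA]
    have hjA' : j ∉ insert c0 (((precedingSet σ c0).erase i).erase j) := by
      simp [hjc0, hjA]
    have hRB1 : Rr (insert c0 (precedingSet σ c0))
        = ∑ T ∈ (((precedingSet σ c0).erase i).erase j).powerset,
            (D2 T * prodPi p T (insert c0 (((precedingSet σ c0).erase i).erase j)))
          + ∑ T ∈ (((precedingSet σ c0).erase i).erase j).powerset,
            (D2 (insert c0 T) * prodPi p (insert c0 T)
              (insert c0 (((precedingSet σ c0).erase i).erase j))) := by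
      rw [hins, hRmain _ hiA' hjA', Finset.sum_powerset_insert hc0A]
    have hRB0 : Rr (precedingSet σ c0)
        = ∑ T ∈ (((precedingSet σ c0).erase i).erase j).powerset,
            D2 T * prodPi p T (((precedingSet σ c0).erase i).erase j) := by
      conv_lhs => rw [hpre]
      rw [hRmain _ hiA hjA]
    rw [hRB1, hRB0]
    have e1 : ∀ T ∈ (((precedingSet σ c0).erase i).erase j).powerset,
        D2 T * prodPi p T (insert c0 (((precedingSet σ c0).erase i).erase j))
          = D2 T * ((1 - p c0) * prodPi p T (((precedingSet σ c0).erase i).erase j)) := by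
      intro T hT
      rw [prodPi_insert_right p hc0A (Finset.mem_powerset.1 hT)]
    have e2 : ∀ T ∈ (((precedingSet σ c0).erase i).erase j).powerset,
        D2 (insert c0 T) * prodPi p (insert c0 T)
            (insert c0 (((precedingSet σ c0).erase i).erase j))
          = D2 (insert c0 T)
            * (p c0 * prodPi p T (((precedingSet σ c0).erase i).erase j)) := by
      intro T hT
      rw [prodPi_insert_both p hc0A (Finset.mem_powerset.1 hT)]
    rw [Finset.sum_congr rfl e1, Finset.sum_congr rfl e2, ← Finset.sum_add_distrib,
      ← Finset.sum_sub_distrib, Finset.mul_sum]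
    refine Finset.sum_congr rfl fun T _ => ?_
    ring
  have htool : ∀ σ : Fin (Fintype.card (Fin n)) ≃ Fin n,
      0 ≤ Rr (insert c0 (precedingSet σ c0)) - Rr (precedingSet σ c0) := by
    intro σ
    by_cases hin : i ∈ precedingSet σ c0 ∧ j ∈ precedingSet σ c0
    · rw [ht σ hin.1 hin.2]
      refine mul_nonneg (hp c0).1 (Finset.sum_nonneg fun T hT => ?_)
      have hTsub := Finset.mem_powerset.1 hT
      have hiT : i ∉ T := fun h => Finset.notMem_erase i _
        (Finset.mem_of_mem_erase (hTsub h))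
      have hjT : j ∉ T := fun h => Finset.notMem_erase j _ (hTsub h)
      have hc0T : c0 ∉ T := by
        intro h
        have hmem := Finset.mem_of_mem_erase (Finset.mem_of_mem_erase (hTsub h))
        rw [precedingSet, Finset.mem_filter] at hmem
        exact absurd hmem.2 (lt_irrefl _)
      refine mul_nonneg ?_ (prodPi_nonneg hp _ _)
      rw [hD2c0 T]
      linarith [hD2le T hc0T hiT hjT]
    · have hnot : (i ∉ precedingSet σ c0 ∨ j ∉ precedingSet σ c0) := by tauto
      have h1 : Rr (precedingSet σ c0) = 0 := hR0 _ hnot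
      have h2 : Rr (insert c0 (precedingSet σ c0)) = 0 := by
        refine hR0 _ ?_
        rcases hnot with h | h
        · exact Or.inl (by simp [hic0, h])
        · exact Or.inr (by simp [hjc0, h])
      rw [h1, h2]
      simp
  -- a specific ordering putting i, j first and c0 third
  have hone : (1:ℕ) < n := by omega
  have htwo : (2:ℕ) < n := by omega
  set v1 : Fin n := ⟨1, hone⟩ with hv1
  set v2 : Fin n := ⟨2, htwo⟩ with hv2
  have hc0v1 : c0 ≠ v1 := Fin.ne_of_val_ne (by norm_num)
  have hc0v2 : c0 ≠ v2 := Fin.ne_of_val_ne (by norm_num)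
  have hv1v2 : v1 ≠ v2 := Fin.ne_of_val_ne (by norm_num)
  obtain ⟨σs, hσs⟩ : ∃ σ : Fin (Fintype.card (Fin n)) ≃ Fin n,
      precedingSet σ c0 = {i, j} := by
    set ρ1 : Equiv.Perm (Fin n) := Equiv.swap c0 v2 with hρ1
    have ha1two : ρ1 i ≠ v2 := by
      intro h
      exact hic0 (ρ1.injective (h.trans (Equiv.swap_apply_left c0 v2).symm))
    set ρ2 : Equiv.Perm (Fin n) := Equiv.swap (ρ1 i) c0 with hρ2
    have hb1 : ρ2 (ρ1 j) ≠ v2 := by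
      intro h
      have h2v : ρ2 v2 = v2 := Equiv.swap_apply_of_ne_of_ne (Ne.symm ha1two) (Ne.symm hc0v2)
      have h3 := ρ2.injective (h.trans h2v.symm)
      exact hjc0 (ρ1.injective (h3.trans (Equiv.swap_apply_left c0 v2).symm))
    have hb0 : ρ2 (ρ1 j) ≠ c0 := by
      intro h
      have h2 : ρ2 (ρ1 j) = ρ2 (ρ1 i) := h.trans (Equiv.swap_apply_left (ρ1 i) c0).symm
      exact hij (ρ1.injective (ρ2.injective h2)).symm
    set ρ3 : Equiv.Perm (Fin n) := Equiv.swap (ρ2 (ρ1 j)) v1 with hρ3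
    set ρ : Equiv.Perm (Fin n) := ρ1.trans (ρ2.trans ρ3) with hρ
    have hρc0 : ρ c0 = v2 := by
      have s1 : ρ1 c0 = v2 := Equiv.swap_apply_left _ _
      have s2 : ρ2 v2 = v2 := Equiv.swap_apply_of_ne_of_ne (Ne.symm ha1two) (Ne.symm hc0v2)
      have s3 : ρ3 v2 = v2 := Equiv.swap_apply_of_ne_of_ne (Ne.symm hb1) (Ne.symm hv1v2)
      simp only [hρ, Equiv.trans_apply]
      rw [s1, s2, s3]
    have hρi : ρ i = c0 := by
      have s2 : ρ2 (ρ1 i) = c0 := Equiv.swap_apply_left _ _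
      have s3 : ρ3 c0 = c0 := Equiv.swap_apply_of_ne_of_ne (Ne.symm hb0) hc0v1
      simp only [hρ, Equiv.trans_apply]
      rw [s2, s3]
    have hρj : ρ j = v1 := by
      simp only [hρ, Equiv.trans_apply]
      exact Equiv.swap_apply_left _ _
    refine ⟨(ρ.trans (finCongr (Fintype.card_fin n).symm)).symm, ?_⟩
    ext y
    rw [precedingSet, Finset.mem_filter]
    simp only [Equiv.symm_symm, Equiv.trans_apply, Finset.mem_univ, true_and,
      Finset.mem_insert, Finset.mem_singleton]
    rw [Fin.lt_def]
    simp only [finCongr_apply_coe]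
    constructor
    · intro hlt
      rw [hρc0] at hlt
      have hlt2 : (ρ y).val < 2 := hlt
      have hval : (ρ y).val = 0 ∨ (ρ y).val = 1 := by omega
      rcases hval with h0 | h1
      · left
        have hyc : ρ y = c0 := Fin.ext h0
        exact ρ.injective (hyc.trans hρi.symm)
      · right
        have hyc : ρ y = v1 := Fin.ext h1
        exact ρ.injective (hyc.trans hρj.symm)
    · rintro (rfl | rfl)
      · rw [hρi, hρc0]
        norm_num
      · rw [hρj, hρc0]
        norm_num
  have hiσs : i ∈ precedingSet σs c0 := by
    rw [hσs]
    exact Finset.mem_insert_self _ _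
  have hjσs : j ∈ precedingSet σs c0 := by
    rw [hσs]
    exact Finset.mem_insert_of_mem (Finset.mem_singleton_self _)
  have hsumpos : 0 < ∑ σ : Fin (Fintype.card (Fin n)) ≃ Fin n,
      (Rr (insert c0 (precedingSet σ c0)) - Rr (precedingSet σ c0)) := by
    refine Finset.sum_pos' (fun σ _ => htool σ) ⟨σs, Finset.mem_univ _, ?_⟩
    have key := ht σs hiσs hjσs
    rw [hσs] at key
    have hAe : ((({i, j} : Finset (Fin n)).erase i).erase j) = ∅ := by
      rw [show ({i, j} : Finset (Fin n)) = insert i {j} from rfl,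
        Finset.erase_insert (by simpa using hij), Finset.erase_singleton]
    rw [hAe, Finset.powerset_empty, Finset.sum_singleton] at key
    have hprod1 : prodPi p (∅ : Finset (Fin n)) ∅ = 1 := by
      rw [prodPi]
      simp
    rw [hprod1, hD2c0 ∅] at key
    rw [hσs, key]
    have hge : (1:ℝ) ≤ 0 - D2 ∅ := by linarith [hD2empty]
    have h2 : (0:ℝ) < (0 - D2 ∅) * 1 := by linarith
    exact mul_pos hp1' h2
  -- corner combination equals the positive sum
  have hfactpos : (0:ℝ) < 1 / ((Fintype.card (Fin n)).factorial : ℝ) := by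
    have hf : (0:ℝ) < ((Fintype.card (Fin n)).factorial : ℝ) := by
      exact_mod_cast (Fintype.card (Fin n)).factorial_pos
    positivity
  have hDW : shapley (relExt (u 1 1) (vNC1 G)) c0 - shapley (relExt (u 1 0) (vNC1 G)) c0
      - shapley (relExt (u 0 1) (vNC1 G)) c0 + shapley (relExt (u 0 0) (vNC1 G)) c0
      = (1 / ((Fintype.card (Fin n)).factorial : ℝ)) *
        ∑ σ : Fin (Fintype.card (Fin n)) ≃ Fin n,
          (Rr (insert c0 (precedingSet σ c0)) - Rr (precedingSet σ c0)) := by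
    unfold shapley
    rw [← mul_sub, ← mul_sub, ← mul_add, ← Finset.sum_sub_distrib, ← Finset.sum_sub_distrib,
      ← Finset.sum_add_distrib]
    congr 1
    refine Finset.sum_congr rfl fun σ _ => ?_
    simp only [hRr]
    ring
  have hd : 0 < shapley (relExt (u 1 1) (vNC1 G)) c0 - shapley (relExt (u 1 0) (vNC1 G)) c0
      - shapley (relExt (u 0 1) (vNC1 G)) c0 + shapley (relExt (u 0 0) (vNC1 G)) c0 := by
    rw [hDW]
    exact mul_pos hfactpos hsumpos
  -- bi-affinity
  have haff1 : ∀ x y : ℝ, shapley (relExt (u x y) (vNC1 G)) c0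
      = shapley (relExt (u x 0) (vNC1 G)) c0
        + y * (shapley (relExt (u x 1) (vNC1 G)) c0
          - shapley (relExt (u x 0) (vNC1 G)) c0) := by
    intro x y
    simp only [hu]
    exact shapley_relExt_update (vNC1 G) c0 (Function.update p i x) j y
  have haff2 : ∀ t x : ℝ, shapley (relExt (u x t) (vNC1 G)) c0
      = shapley (relExt (u 0 t) (vNC1 G)) c0
        + x * (shapley (relExt (u 1 t) (vNC1 G)) c0
          - shapley (relExt (u 0 t) (vNC1 G)) c0) := by
    intro t x
    have hcomm : ∀ s : ℝ, u s t = Function.update (Function.update p j t) i s := by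
      intro s
      simp only [hu]
      exact Function.update_comm hij s t p
    rw [hcomm x, hcomm 0, hcomm 1]
    exact shapley_relExt_update (vNC1 G) c0 (Function.update p j t) i x
  -- symmetry between i and j
  have hswapfix : Equiv.swap i j c0 = c0 :=
    Equiv.swap_apply_of_ne_of_ne (Ne.symm hic0) (Ne.symm hjc0)
  have hgadj : ∀ x y : Fin n, G.Adj (Equiv.swap i j x) (Equiv.swap i j y) ↔ G.Adj x y := by
    have hceq : ∀ a : Fin n, Equiv.swap i j a = c0 ↔ a = c0 := by
      intro a
      constructor
      · intro h
        exact Equiv.injective _ (h.trans hswapfix.symm)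
      · rintro rfl
        exact hswapfix
    rcases hG' with rfl | rfl
    · intro x y
      rw [SimpleGraph.top_adj, SimpleGraph.top_adj]
      exact (Equiv.injective _).ne_iff
    · intro x y
      rw [starGraph, SimpleGraph.fromRel_adj, SimpleGraph.fromRel_adj]
      rw [hceq x, hceq y, (Equiv.injective (Equiv.swap i j)).ne_iff]
  have hsym : shapley (relExt (u 1 0) (vNC1 G)) c0 = shapley (relExt (u 0 1) (vNC1 G)) c0 := by
    have hfun : (fun k => (u 0 1) (Equiv.swap i j k)) = u 1 0 := by
      funext k
      rcases eq_or_ne k i with rfl | hki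
      · rw [Equiv.swap_apply_left, hu_j, hu_i]
      · rcases eq_or_ne k j with rfl | hkj
        · rw [Equiv.swap_apply_right, hu_i, hu_j]
        · rw [Equiv.swap_apply_of_ne_of_ne hki hkj, hu_k 0 1 k hki hkj,
            hu_k 1 0 k hki hkj]
    calc shapley (relExt (u 1 0) (vNC1 G)) c0
        = shapley (relExt (fun k => (u 0 1) (Equiv.swap i j k)) (vNC1 G)) c0 := by rw [hfun]
      _ = shapley (relExt (u 0 1) (vNC1 G)) c0 :=
          shapley_relExt_comp G (Equiv.swap i j) hgadj (u 0 1) c0 hswapfix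
  -- final assembly
  refine ⟨1, one_pos, ?_⟩
  intro ε _ hε
  have hvec : Function.update (Function.update p j (p j + ε)) i (p i - ε)
      = u (p i - ε) (p j + ε) := by
    simp only [hu]
    exact (Function.update_comm hij (p i - ε) (p j + ε) p).symm
  have hpu : p = u (p i) (p j) := by
    simp only [hu]
    rw [Function.update_eq_self i p, Function.update_eq_self j p]
  have hgoal : shapley (relExt
        (Function.update (Function.update p j (p j + ε)) i (p i - ε)) (vNC1 G)) c0
      < shapley (relExt p (vNC1 G)) c0 := by
    rw [hvec]
    conv_rhs => rw [hpu]
    rw [haff1 (p i - ε) (p j + ε), haff2 0 (p i - ε), haff2 1 (p i - ε),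
      haff1 (p i) (p j), haff2 0 (p i), haff2 1 (p i)]
    rw [hsym] at hd ⊢
    rw [hpij]
    have hε2 : 0 < ε * ε := mul_self_pos.mpr hε
    nlinarith [mul_pos hd hε2]
  calc shapley (relExt (@Function.update (Fin n) (fun _ => ℝ) (instDecidableEqFin n)
        (@Function.update (Fin n) (fun _ => ℝ) (instDecidableEqFin n) p j (p j + ε))
        i (p i - ε)) (vNC1 G)) ⟨0, by omega⟩
      = shapley (relExt
          (Function.update (Function.update p j (p j + ε)) i (p i - ε)) (vNC1 G)) c0 := by
        rw [hupd, hupd]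
    _ < shapley (relExt p (vNC1 G)) c0 := hgoal

end
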